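/- Let Φ : X → ℝ ∪ {+∞} be proper, lower semicontinuous, and bounded below. Let {x^k} be a bounded sequence satisfying: (H1) Φ(x^{k+1}) + a‖x^{k+1} - x^k‖² ≤ Φ(x^{ℓ(k)}) for some a > 0 and all k, where ℓ(k) is the largest index in argmax{Φ(x^j) : j = max(k-m,0),…,k}; and (H2) for any convergent subsequence {x^{ℓ(k_j)}}, limsup_{j→∞} Φ(x^{ℓ(k_j)}) ≤ Φ(lim_{j→∞} x^{ℓ(k_j)}). Then lim_{k→∞} ‖x^{k+1} - x^k‖ = 0, lim_{k→∞} ‖x^k - x^{ℓ(k)}‖ = 0, and lim_{k→∞} Φ(x^k) = ϖ*, where ϖ* := lim_{k→∞} Φ(x^{ℓ(k)}). -/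

import Mathlib

open Filter Topology Bornology

lemma keyL {X : Type*} [NormedAddCommGroup X] [InnerProductSpace ℝ X]
    [FiniteDimensional ℝ X]
    (Φ : X → ℝ) (hlsc : LowerSemicontinuous Φ)
    (x : ℕ → X) (ℓ : ℕ → ℕ)
    (hH2 : ∀ φ : ℕ → ℕ, StrictMono φ → ∀ p : X,
      Tendsto (fun j => x (ℓ (φ j))) atTop (𝓝 p) →
      Filter.limsup (fun j => Φ (x (ℓ (φ j)))) atTop ≤ Φ p)
    (ϖ : ℝ) (hϖ : Tendsto (fun k => Φ (x (ℓ k))) atTop (𝓝 ϖ))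
    (σ : ℕ → ℕ) (hσ : StrictMono σ) (y : ℕ → X) (R : ℝ) (hyR : ∀ k, ‖y k‖ ≤ R)
    (hy : Tendsto (fun k => ‖y k - x (ℓ (σ k))‖) atTop (𝓝 0)) :
    ∀ c < ϖ, ∀ᶠ k in atTop, c < Φ (y k) := by
  intro c hc
  by_contra h
  have hfreq : ∃ᶠ k in atTop, Φ (y k) ≤ c := by
    simpa [not_lt] using (Filter.not_eventually.mp h)
  obtain ⟨ψ, hψmono, hψ⟩ := Filter.extraction_of_frequently_atTop hfreq
  have hball : ∀ i, y (ψ i) ∈ Metric.closedBall (0 : X) R := by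
    intro i; simpa [Metric.mem_closedBall, dist_eq_norm] using hyR (ψ i)
  obtain ⟨p, -, ρ, hρmono, hρ⟩ :=
    tendsto_subseq_of_bounded (Metric.isBounded_closedBall (x := (0:X)) (r := R)) hball
  set φ := fun i => σ (ψ (ρ i)) with hφdef
  have hφmono : StrictMono φ := hσ.comp (hψmono.comp hρmono)
  have hdiff : Tendsto (fun i => y (ψ (ρ i)) - x (ℓ (φ i))) atTop (𝓝 0) := by
    have h1 := hy.comp ((hψmono.comp hρmono).tendsto_atTop)
    exact tendsto_zero_iff_norm_tendsto_zero.mpr (by simpa [Function.comp_def] using h1)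
  have hxp : Tendsto (fun i => x (ℓ (φ i))) atTop (𝓝 p) := by
    have : Tendsto (fun i => y (ψ (ρ i)) - (y (ψ (ρ i)) - x (ℓ (φ i)))) atTop (𝓝 (p - 0)) :=
      Tendsto.sub (by simpa [Function.comp_def] using hρ) hdiff
    simpa using this
  have hlim : Tendsto (fun i => Φ (x (ℓ (φ i)))) atTop (𝓝 ϖ) :=
    hϖ.comp hφmono.tendsto_atTop
  have hles : ϖ ≤ Φ p := by
    have := hH2 φ hφmono p hxp
    rwa [hlim.limsup_eq] at this
  have hev : ∀ᶠ z in 𝓝 p, c < Φ z := hlsc p c (lt_of_lt_of_le hc hles)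
  obtain ⟨i, hi⟩ := (hρ.eventually hev).exists
  exact absurd (hψ (ρ i)) (not_le.mpr hi)

/-- Proposition 2.1: for a bounded sequence satisfying H1 and H2, the successive
step lengths vanish, `x^k` and `x^{ℓ(k)}` become asymptotically identical, and the
whole objective value sequence converges to `ϖ* = lim Φ(x^{ℓ(k)})`. -/
theorem stmt_5 {X : Type*} [NormedAddCommGroup X] [InnerProductSpace ℝ X]
    [FiniteDimensional ℝ X]
    (Φ : X → ℝ) (hlsc : LowerSemicontinuous Φ) (hbdd : BddBelow (Set.range Φ))
    (m : ℕ) (a : ℝ) (ha : 0 < a)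
    (x : ℕ → X) (hxbdd : ∃ R : ℝ, ∀ k, ‖x k‖ ≤ R) (ℓ : ℕ → ℕ)
    (hℓmem : ∀ k, ℓ k ∈ Finset.Icc (k - m) k)
    (hℓmax : ∀ k, ∀ j ∈ Finset.Icc (k - m) k, Φ (x j) ≤ Φ (x (ℓ k)))
    (hℓlargest : ∀ k, ∀ j ∈ Finset.Icc (k - m) k, Φ (x j) = Φ (x (ℓ k)) → j ≤ ℓ k)
    (hH1 : ∀ k, Φ (x (k + 1)) + a * ‖x (k + 1) - x k‖ ^ 2 ≤ Φ (x (ℓ k)))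
    (hH2 : ∀ φ : ℕ → ℕ, StrictMono φ → ∀ p : X,
      Tendsto (fun j => x (ℓ (φ j))) atTop (𝓝 p) →
      Filter.limsup (fun j => Φ (x (ℓ (φ j)))) atTop ≤ Φ p) :
    ∃ ϖ : ℝ, Tendsto (fun k => Φ (x (ℓ k))) atTop (𝓝 ϖ) ∧
      Tendsto (fun k => ‖x (k + 1) - x k‖) atTop (𝓝 0) ∧
      Tendsto (fun k => ‖x k - x (ℓ k)‖) atTop (𝓝 0) ∧
      Tendsto (fun k => Φ (x k)) atTop (𝓝 ϖ) := by
  obtain ⟨R, hR⟩ := hxbdd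
  have hself : ∀ k, Φ (x k) ≤ Φ (x (ℓ k)) := fun k =>
    hℓmax k k (Finset.mem_Icc.mpr ⟨Nat.sub_le k m, le_refl k⟩)
  have hℓle : ∀ k, ℓ k ≤ k := fun k => (Finset.mem_Icc.mp (hℓmem k)).2
  have hℓge : ∀ k, k - m ≤ ℓ k := fun k => (Finset.mem_Icc.mp (hℓmem k)).1
  have hℓtop : Tendsto ℓ atTop atTop :=
    tendsto_atTop_mono hℓge (tendsto_sub_atTop_nat m)
  have hanti : Antitone (fun k => Φ (x (ℓ k))) := by
    apply antitone_nat_of_succ_le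
    intro k
    rcases Nat.lt_or_ge (ℓ (k + 1)) (k + 1) with hlt | hge
    · refine hℓmax k _ (Finset.mem_Icc.mpr ⟨?_, by omega⟩)
      have := hℓge (k + 1); omega
    · have hek : ℓ (k + 1) = k + 1 := le_antisymm (hℓle _) hge
      simp only [hek]
      have h1 := hH1 k
      nlinarith [sq_nonneg ‖x (k + 1) - x k‖]
  obtain ⟨B, hB⟩ := hbdd
  have hBle : ∀ v, B ≤ Φ v := fun v => hB ⟨v, rfl⟩
  have hbdd2 : BddBelow (Set.range fun k => Φ (x (ℓ k))) :=
    ⟨B, by rintro r ⟨k, rfl⟩; exact hBle _⟩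
  have hϖ : Tendsto (fun k => Φ (x (ℓ k))) atTop (𝓝 (⨅ k, Φ (x (ℓ k)))) :=
    tendsto_atTop_ciInf hanti hbdd2
  set ϖ := ⨅ k, Φ (x (ℓ k)) with hϖdef
  -- Φ(x^{ℓ(k)-j}) → ϖ, given the distance statement
  have hQ : ∀ j : ℕ, Tendsto (fun k => ‖x (ℓ k) - x (ℓ k - j)‖) atTop (𝓝 0) →
      Tendsto (fun k => Φ (x (ℓ k - j))) atTop (𝓝 ϖ) := by
    intro j hPj
    have hlow := keyL Φ hlsc x ℓ hH2 ϖ hϖ id strictMono_id (fun k => x (ℓ k - j)) R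
      (fun k => hR _) (by simpa [norm_sub_rev] using hPj)
    have htop : Tendsto (fun k => ℓ k - j) atTop atTop := (tendsto_sub_atTop_nat j).comp hℓtop
    have hupcomp : Tendsto (fun k => Φ (x (ℓ (ℓ k - j)))) atTop (𝓝 ϖ) := hϖ.comp htop
    refine tendsto_order.2 ⟨fun c hc => hlow c hc, fun c hc => ?_⟩
    filter_upwards [hupcomp.eventually_lt_const hc] with k hk
    exact lt_of_le_of_lt (hself _) hk
  -- the inductive distance statement
  have hD : ∀ j : ℕ, Tendsto (fun k => ‖x (ℓ k) - x (ℓ k - j)‖) atTop (𝓝 0) := by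
    intro j
    induction j with
    | zero => simpa using (tendsto_const_nhds : Tendsto (fun _ : ℕ => (0:ℝ)) atTop _)
    | succ j ih =>
      have hQj := hQ j ih
      have htop : Tendsto (fun k => ℓ k - (j + 1)) atTop atTop :=
        (tendsto_sub_atTop_nat _).comp hℓtop
      have hup : Tendsto (fun k => Φ (x (ℓ (ℓ k - (j + 1))))) atTop (𝓝 ϖ) := hϖ.comp htop
      have hsq : Tendsto (fun k => ‖x (ℓ k - j) - x (ℓ k - (j + 1))‖ ^ 2) atTop (𝓝 0) := by
        have hg : Tendsto
            (fun k => (Φ (x (ℓ (ℓ k - (j + 1)))) - Φ (x (ℓ k - j))) / a) atTop (𝓝 0) := by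
          have := (hup.sub hQj).div_const a
          simpa using this
        refine squeeze_zero' (Eventually.of_forall fun k => sq_nonneg _) ?_ hg
        filter_upwards [hℓtop.eventually_ge_atTop (j + 1)] with k hk
        have he : ℓ k - (j + 1) + 1 = ℓ k - j := by omega
        have h1 := hH1 (ℓ k - (j + 1))
        rw [he] at h1
        rw [le_div_iff₀ ha]
        linarith
      have hn : Tendsto (fun k => ‖x (ℓ k - j) - x (ℓ k - (j + 1))‖) atTop (𝓝 0) := by
        have := hsq.sqrt
        simpa [Real.sqrt_sq_eq_abs, abs_norm] using this
      refine squeeze_zero (fun k => norm_nonneg _) (fun k => ?_)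
        (by simpa using ih.add hn)
      exact norm_sub_le_norm_sub_add_norm_sub _ _ _
  -- the sum of the distances
  set S := fun k => ∑ i ∈ Finset.range (2 * m + 1), ‖x (ℓ k) - x (ℓ k - i)‖ with hSdef
  have hS : Tendsto S atTop (𝓝 0) := by
    have := tendsto_finset_sum (Finset.range (2 * m + 1))
      (fun i (_ : i ∈ Finset.range (2 * m + 1)) => hD i)
    simpa using this
  have hSle : ∀ k, ∀ j ≤ 2 * m, ‖x (ℓ k) - x (ℓ k - j)‖ ≤ S k := by
    intro k j hj
    exact Finset.single_le_sum (f := fun i => ‖x (ℓ k) - x (ℓ k - i)‖)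
      (fun i _ => norm_nonneg _) (Finset.mem_range.mpr (by omega))
  have hSm : Tendsto (fun k => S (k + m)) atTop (𝓝 0) := hS.comp (tendsto_add_atTop_nat m)
  -- ‖x^k - x^{ℓ(k+m)}‖ → 0
  have hA : Tendsto (fun k => ‖x k - x (ℓ (k + m))‖) atTop (𝓝 0) := by
    refine squeeze_zero (fun k => norm_nonneg _) (fun k => ?_) hSm
    have h1 : k ≤ ℓ (k + m) := by have := hℓge (k + m); omega
    have h2 : ℓ (k + m) ≤ k + m := hℓle _
    have he : ℓ (k + m) - (ℓ (k + m) - k) = k := by omega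
    calc ‖x k - x (ℓ (k + m))‖
        = ‖x (ℓ (k + m)) - x (ℓ (k + m) - (ℓ (k + m) - k))‖ := by rw [he, norm_sub_rev]
      _ ≤ S (k + m) := hSle (k + m) _ (by omega)
  -- third conclusion
  have hC : Tendsto (fun k => ‖x k - x (ℓ k)‖) atTop (𝓝 0) := by
    refine squeeze_zero (fun k => norm_nonneg _) (fun k => ?_) (by simpa using hA.add hSm)
    have h1 : k ≤ ℓ (k + m) := by have := hℓge (k + m); omega
    have h2 : ℓ (k + m) ≤ k + m := hℓle _
    have h3 : ℓ k ≤ k := hℓle k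
    have h4 : k - m ≤ ℓ k := hℓge k
    have he : ℓ (k + m) - (ℓ (k + m) - ℓ k) = ℓ k := by omega
    have hb : ‖x (ℓ (k + m)) - x (ℓ k)‖ ≤ S (k + m) := by
      calc ‖x (ℓ (k + m)) - x (ℓ k)‖
          = ‖x (ℓ (k + m)) - x (ℓ (k + m) - (ℓ (k + m) - ℓ k))‖ := by rw [he]
        _ ≤ S (k + m) := hSle (k + m) _ (by omega)
    calc ‖x k - x (ℓ k)‖ ≤ ‖x k - x (ℓ (k + m))‖ + ‖x (ℓ (k + m)) - x (ℓ k)‖ :=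
          norm_sub_le_norm_sub_add_norm_sub _ _ _
      _ ≤ ‖x k - x (ℓ (k + m))‖ + S (k + m) := by linarith
  -- fourth conclusion
  have hΦ : Tendsto (fun k => Φ (x k)) atTop (𝓝 ϖ) := by
    have hmono : StrictMono (fun k => k + m) := fun i j h => Nat.add_lt_add_right h m
    have hlow := keyL Φ hlsc x ℓ hH2 ϖ hϖ (fun k => k + m) hmono x R hR hA
    refine tendsto_order.2 ⟨fun c hc => hlow c hc, fun c hc => ?_⟩
    filter_upwards [hϖ.eventually_lt_const hc] with k hk
    exact lt_of_le_of_lt (hself k) hk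
  -- second conclusion
  have hd : Tendsto (fun k => ‖x (k + 1) - x k‖) atTop (𝓝 0) := by
    have hsq : Tendsto (fun k => ‖x (k + 1) - x k‖ ^ 2) atTop (𝓝 0) := by
      have hg : Tendsto (fun k => (Φ (x (ℓ k)) - Φ (x (k + 1))) / a) atTop (𝓝 0) := by
        have := (hϖ.sub (hΦ.comp (tendsto_add_atTop_nat 1))).div_const a
        simpa [Function.comp] using this
      refine squeeze_zero (fun k => sq_nonneg _) (fun k => ?_) hg
      rw [le_div_iff₀ ha]
      have := hH1 k
      linarith
    have := hsq.sqrt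
    simpa [Real.sqrt_sq_eq_abs, abs_norm] using this
  exact ⟨ϖ, hϖ, hd, hC, hΦ⟩
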